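/- Let α : ℝ → ℝ be continuous with α(x) > 0 for all x, and let ρ : ℝ → ℝ be differentiable with ρ′(x) = 1/α(x) for all x and ρ(x) → ±∞ as x → ±∞. Let N_φ, N_ψ ∈ ℂ with conj(N_ψ) N_φ = 1/√(2π). Define φₙ(x) = (N_φ/√(2ⁿ n!)) Hₙ(ρ(x)/√2) e^{−ρ(x)²/2} and ψₙ(x) = (N_ψ/√(2ⁿ n!)) Hₙ(ρ(x)/√2) · (1/α(x)). Then for all n, m ≥ 0 the product conj(ψₘ) φₙ is Lebesgue integrable on ℝ and ∫_ℝ conj(ψₘ(x)) φₙ(x) dx = δ_{n,m}. -/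

import Mathlib

open MeasureTheory Filter Topology

/-- The physicist's Hermite polynomials:
`H₀(y) = 1`, `Hₙ(y) = 2y H_{n−1}(y) − H_{n−1}′(y)`. -/
noncomputable def hermiteH : ℕ → ℝ → ℝ
  | 0 => fun _ => 1
  | n + 1 => fun y => 2 * y * hermiteH n y - deriv (hermiteH n) y

namespace Stmt8Aux

open Polynomial Real

/-- probabilist Hermite polynomials over `ℝ` -/
noncomputable def He : ℕ → ℝ[X]
  | 0 => 1
  | n + 1 => X * He n - derivative (He n)

/-- physicist Hermite polynomials over `ℝ` -/
noncomputable def Hp : ℕ → ℝ[X]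
  | 0 => 1
  | n + 1 => 2 * X * Hp n - derivative (Hp n)

lemma hermiteH_eq (n : ℕ) : hermiteH n = fun y => (Hp n).eval y := by
  induction n with
  | zero => funext y; simp [hermiteH, Hp]
  | succ n ih =>
    funext y
    show 2 * y * hermiteH n y - deriv (hermiteH n) y = _
    rw [ih]
    simp [Hp, Polynomial.deriv]

lemma Hp_eq_He (n : ℕ) :
    Hp n = C ((Real.sqrt 2) ^ n) * (He n).comp (C (Real.sqrt 2) * X) := by
  induction n with
  | zero => simp [Hp, He]
  | succ n ih =>
    have h2 : (C (Real.sqrt 2) : ℝ[X]) * C (Real.sqrt 2) = 2 := by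
      rw [← C_mul, Real.mul_self_sqrt (by norm_num : (0:ℝ) ≤ 2)]
      exact map_ofNat C 2
    simp only [Hp, He, ih, derivative_C_mul, derivative_comp, derivative_mul, derivative_X,
      sub_comp, mul_comp, X_comp, derivative_C, pow_succ, map_mul, zero_mul, mul_one, zero_add]
    rw [← h2]
    ring

lemma hermiteH_sqrt2 (n : ℕ) (y : ℝ) :
    hermiteH n (y / Real.sqrt 2) = (Real.sqrt 2) ^ n * (He n).eval y := by
  have hs : Real.sqrt 2 ≠ 0 := by positivity
  rw [hermiteH_eq, Hp_eq_He]
  simp only [eval_mul, eval_C, eval_comp, eval_X]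
  rw [mul_div_cancel₀ _ hs]

lemma derivative_He (n : ℕ) :
    derivative (He (n + 1)) = C ((n : ℝ) + 1) * He n := by
  induction n with
  | zero => simp [He]
  | succ n ih =>
    have hs : He (n + 1) = X * He n - derivative (He n) := rfl
    show derivative (X * He (n+1) - derivative (He (n+1))) = _
    rw [derivative_sub, derivative_mul, derivative_X, one_mul, ih, derivative_C_mul]
    have hC : (C ((↑(n+1):ℝ) + 1) : ℝ[X]) = C ((n:ℝ) + 1) + 1 := by
      push_cast
      rw [C_add, C_1]
    have hmid : X * (C ((n:ℝ)+1) * He n) - C ((n:ℝ)+1) * derivative (He n)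
        = C ((n:ℝ)+1) * He (n+1) := by
      rw [hs]; ring
    rw [hC, add_sub_assoc, hmid]
    ring

lemma hasDerivAt_gauss (x : ℝ) :
    HasDerivAt (fun y : ℝ => Real.exp (-(y ^ 2 / 2))) (-x * Real.exp (-(x ^ 2 / 2))) x := by
  have h : HasDerivAt (fun y : ℝ => -(y ^ 2 / 2)) (-x) x := by
    have := ((hasDerivAt_pow 2 x).div_const 2).neg
    exact this.congr_deriv (by norm_num)
  simpa [mul_comm] using h.exp

lemma hasDerivAt_He_gauss (n : ℕ) (x : ℝ) :
    HasDerivAt (fun y => (He n).eval y * Real.exp (-(y ^ 2 / 2)))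
      (-((He (n + 1)).eval x * Real.exp (-(x ^ 2 / 2)))) x := by
  have h := ((He n).hasDerivAt x).mul (hasDerivAt_gauss x)
  refine h.congr_deriv ?_
  have hs : He (n + 1) = X * He n - derivative (He n) := rfl
  rw [hs]
  simp only [eval_sub, eval_mul, eval_X]
  ring

lemma tendsto_key (p : ℝ[X]) (c : ℝ) :
    Tendsto (fun x => p.eval x * Real.exp (c * x - x ^ 2 / 2)) atTop (𝓝 0) := by
  have h1 : Tendsto (fun x => p.eval x / Real.exp x) atTop (𝓝 0) :=
    p.tendsto_div_exp_atTop
  have h2 : Tendsto (fun x : ℝ => (c + 1) * x - x ^ 2 / 2) atTop atBot := by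
    refine tendsto_atBot_mono' atTop ?_ tendsto_neg_atTop_atBot
    filter_upwards [eventually_ge_atTop (2 * |c| + 4)] with x hx
    nlinarith [le_abs_self c, neg_abs_le c, abs_nonneg c]
  have h3 : Tendsto (fun x : ℝ => Real.exp ((c + 1) * x - x ^ 2 / 2)) atTop (𝓝 0) :=
    Real.tendsto_exp_atBot.comp h2
  have h4 := h1.mul h3
  rw [zero_mul] at h4
  refine Tendsto.congr (fun x => ?_) h4
  rw [div_mul_eq_mul_div, mul_div_assoc, ← Real.exp_sub]
  ring_nf

lemma tendsto_poly_gauss_atTop (p : ℝ[X]) :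
    Tendsto (fun x => p.eval x * Real.exp (-(x ^ 2 / 2))) atTop (𝓝 0) := by
  have := tendsto_key p 0
  simpa using this

lemma tendsto_poly_gauss_atBot (p : ℝ[X]) :
    Tendsto (fun x => p.eval x * Real.exp (-(x ^ 2 / 2))) atBot (𝓝 0) := by
  have h := (tendsto_poly_gauss_atTop (p.comp (-X))).comp tendsto_neg_atBot_atTop
  refine Tendsto.congr (fun x => ?_) h
  simp [Function.comp, eval_comp, neg_sq]

lemma integrable_poly_gauss (p : ℝ[X]) :
    Integrable (fun x => p.eval x * Real.exp (-(x ^ 2 / 2))) := by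
  have hcont : Continuous fun x : ℝ => p.eval x * Real.exp (-(x ^ 2 / 2)) :=
    p.continuous.mul (Real.continuous_exp.comp (by continuity))
  refine hcont.locallyIntegrable.integrable_of_isBigO_atBot_atTop
    (g := fun x => Real.exp x) ?_ ?_ (g' := fun x => Real.exp (-x)) ?_ ?_
  · refine Asymptotics.IsLittleO.isBigO ?_
    rw [Asymptotics.isLittleO_iff_tendsto (fun x hx => absurd hx (Real.exp_ne_zero x))]
    have h := (tendsto_key (p.comp (-X)) 1).comp tendsto_neg_atBot_atTop
    refine Tendsto.congr (fun x => ?_) h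
    simp only [Function.comp_apply, eval_comp, eval_neg, eval_X, neg_neg]
    rw [eq_div_iff (Real.exp_ne_zero _), mul_assoc, ← Real.exp_add]
    ring_nf
  · exact ⟨Set.Iic 0, Iic_mem_atBot 0, integrableOn_exp_Iic 0⟩
  · refine Asymptotics.IsLittleO.isBigO ?_
    rw [Asymptotics.isLittleO_iff_tendsto (fun x hx => absurd hx (Real.exp_ne_zero _))]
    have h := tendsto_key p 1
    refine Tendsto.congr (fun x => ?_) h
    rw [eq_div_iff (Real.exp_ne_zero _), mul_assoc, ← Real.exp_add]
    ring_nf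
  · refine ⟨Set.Ioi 0, Ioi_mem_atTop 0, ?_⟩
    have := exp_neg_integrableOn_Ioi 0 (one_pos (α := ℝ))
    simpa using this

lemma integral_deriv_zero {F F' : ℝ → ℝ} (hF : ∀ x, HasDerivAt F (F' x) x)
    (hint : Integrable F') (htop : Tendsto F atTop (𝓝 0))
    (hbot : Tendsto F atBot (𝓝 0)) : ∫ x, F' x = 0 := by
  have h1 : ∫ x in Set.Iic (0:ℝ), F' x = F 0 - 0 :=
    integral_Iic_of_hasDerivAt_of_tendsto (hF 0).continuousAt.continuousWithinAt
      (fun x _ => hF x) hint.integrableOn hbot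
  have h2 : ∫ x in Set.Ioi (0:ℝ), F' x = 0 - F 0 :=
    integral_Ioi_of_hasDerivAt_of_tendsto (hF 0).continuousAt.continuousWithinAt
      (fun x _ => hF x) hint.integrableOn htop
  rw [← intervalIntegral.integral_Iic_add_Ioi hint.integrableOn hint.integrableOn, h1, h2]
  ring

/-- the orthogonality integrals -/
noncomputable def J (n m : ℕ) : ℝ :=
  ∫ x : ℝ, (He n).eval x * (He m).eval x * Real.exp (-(x ^ 2 / 2))

lemma integrable_He2 (n m : ℕ) :
    Integrable (fun x => (He n).eval x * (He m).eval x * Real.exp (-(x ^ 2 / 2))) := by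
  have := integrable_poly_gauss (He n * He m)
  simpa [Polynomial.eval_mul] using this

lemma J_symm (n m : ℕ) : J n m = J m n := by
  unfold J
  congr 1
  funext x
  ring

lemma J_succ_zero (n : ℕ) : J (n + 1) 0 = 0 := by
  have h0 : ∫ x : ℝ, -((He (n+1)).eval x * Real.exp (-(x ^ 2 / 2))) = 0 :=
    integral_deriv_zero (hasDerivAt_He_gauss n) ((integrable_He2 (n+1) 0).congr
        (Filter.Eventually.of_forall fun x => by simp [He]) ).neg
      (tendsto_poly_gauss_atTop _) (tendsto_poly_gauss_atBot _)
  have h1 : ∫ x : ℝ, (He (n+1)).eval x * Real.exp (-(x ^ 2 / 2)) = 0 := by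
    rw [integral_neg] at h0
    linarith
  unfold J
  rw [← h1]
  congr 1
  funext x
  simp [He]


lemma J_zero_zero : J 0 0 = Real.sqrt (2 * Real.pi) := by
  unfold J
  have h1 : ∀ x : ℝ, (He 0).eval x * (He 0).eval x * Real.exp (-(x ^ 2 / 2))
      = Real.exp (-(2⁻¹ : ℝ) * x ^ 2) := by
    intro x
    simp [He]
    ring_nf
  simp_rw [h1]
  rw [integral_gaussian]
  congr 1
  ring


lemma J_succ_succ (n m : ℕ) : J (n + 1) (m + 1) = ((m : ℝ) + 1) * J n m := by
  set Q : ℝ[X] := He (m + 1) * He n with hQ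
  have hF : ∀ x : ℝ, HasDerivAt (fun y => Q.eval y * Real.exp (-(y ^ 2 / 2)))
      ((derivative Q).eval x * Real.exp (-(x ^ 2 / 2))
        + Q.eval x * (-x * Real.exp (-(x ^ 2 / 2)))) x :=
    fun x => (Q.hasDerivAt x).mul (hasDerivAt_gauss x)
  have hptwise : ∀ x : ℝ,
      (derivative Q).eval x * Real.exp (-(x ^ 2 / 2)) + Q.eval x * (-x * Real.exp (-(x ^ 2 / 2)))
      = ((m : ℝ) + 1) * ((He n).eval x * (He m).eval x * Real.exp (-(x ^ 2 / 2)))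
        - (He (n+1)).eval x * (He (m+1)).eval x * Real.exp (-(x ^ 2 / 2)) := by
    intro x
    have hdQ : derivative Q = C ((m : ℝ) + 1) * He m * He n
        + He (m + 1) * derivative (He n) := by
      rw [hQ, derivative_mul, derivative_He]
    have hsn : He (n + 1) = X * He n - derivative (He n) := rfl
    rw [hdQ, hQ, hsn]
    simp only [eval_add, eval_mul, eval_sub, eval_C, eval_X]
    ring
  have hFint : Integrable (fun x => (derivative Q).eval x * Real.exp (-(x ^ 2 / 2))
      + Q.eval x * (-x * Real.exp (-(x ^ 2 / 2)))) := by
    have h := integrable_poly_gauss (derivative Q - X * Q)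
    refine h.congr (Filter.Eventually.of_forall fun x => ?_)
    simp only [eval_sub, eval_mul, eval_X]
    ring
  have hzero : ∫ x : ℝ, ((derivative Q).eval x * Real.exp (-(x ^ 2 / 2))
      + Q.eval x * (-x * Real.exp (-(x ^ 2 / 2)))) = 0 :=
    integral_deriv_zero hF hFint (tendsto_poly_gauss_atTop Q) (tendsto_poly_gauss_atBot Q)
  have hint1 : Integrable (fun x =>
      ((m : ℝ) + 1) * ((He n).eval x * (He m).eval x * Real.exp (-(x ^ 2 / 2)))) :=
    (integrable_He2 n m).const_mul _
  have hint2 := integrable_He2 (n+1) (m+1)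
  have key : ∫ x : ℝ, ((derivative Q).eval x * Real.exp (-(x ^ 2 / 2))
      + Q.eval x * (-x * Real.exp (-(x ^ 2 / 2))))
      = ((m : ℝ) + 1) * J n m - J (n+1) (m+1) := by
    simp_rw [hptwise]
    rw [integral_sub hint1 hint2, MeasureTheory.integral_const_mul]
    rfl
  rw [key] at hzero
  linarith

lemma J_eq (n : ℕ) : ∀ m : ℕ,
    J n m = if n = m then (n.factorial : ℝ) * Real.sqrt (2 * Real.pi) else 0 := by
  induction n with
  | zero =>
    intro m
    match m with
    | 0 => simpa using J_zero_zero
    | m + 1 =>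
      rw [J_symm, J_succ_zero]
      simp
  | succ n ih =>
    intro m
    match m with
    | 0 =>
      rw [J_succ_zero]
      simp
    | m + 1 =>
      rw [J_succ_succ, ih m]
      by_cases h : n = m
      · subst h
        simp only [if_pos rfl, Nat.factorial_succ]
        push_cast
        ring
      · simp [h, fun hc : n + 1 = m + 1 => h (Nat.succ_injective hc)]

end Stmt8Aux

/-- compatibility and biorthonormality of the families
`φₙ = (N_φ/√(2ⁿn!)) Hₙ(ρ/√2) e^{−ρ²/2}` and `ψₙ = (N_ψ/√(2ⁿn!)) Hₙ(ρ/√2)/α`. -/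
theorem stmt8 (α : ℝ → ℝ) (hαc : Continuous α) (hαpos : ∀ x : ℝ, 0 < α x)
    (ρ : ℝ → ℝ) (hρ : Differentiable ℝ ρ) (hρ' : ∀ x : ℝ, deriv ρ x = 1 / α x)
    (hρtop : Tendsto ρ atTop atTop) (hρbot : Tendsto ρ atBot atBot)
    (Nφ Nψ : ℂ) (hN : (starRingEnd ℂ) Nψ * Nφ = (Real.sqrt (2 * Real.pi) : ℂ)⁻¹)
    (φ ψ : ℕ → ℝ → ℂ)
    (hφdef : ∀ n : ℕ, φ n = fun x =>
      Nφ / (Real.sqrt (2 ^ n * n.factorial) : ℂ)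
        * (hermiteH n (ρ x / Real.sqrt 2) : ℂ) * (Real.exp (-(ρ x) ^ 2 / 2) : ℂ))
    (hψdef : ∀ n : ℕ, ψ n = fun x =>
      Nψ / (Real.sqrt (2 ^ n * n.factorial) : ℂ)
        * (hermiteH n (ρ x / Real.sqrt 2) : ℂ) * (1 / (α x : ℂ))) :
    ∀ n m : ℕ,
      Integrable (fun x : ℝ => (starRingEnd ℂ) (ψ m x) * φ n x) volume ∧
      ∫ x : ℝ, (starRingEnd ℂ) (ψ m x) * φ n x = if n = m then 1 else 0 := by
  intro n m
  have hα0 : ∀ x, α x ≠ 0 := fun x => (hαpos x).ne'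
  have hderiv : ∀ x ∈ (Set.univ : Set ℝ), HasDerivWithinAt ρ (1 / α x) Set.univ x := by
    intro x _
    have h := (hρ x).hasDerivAt
    rw [hρ' x] at h
    exact h.hasDerivWithinAt
  have hmono : StrictMono ρ := strictMono_of_deriv_pos fun x => by
    rw [hρ' x]; exact one_div_pos.mpr (hαpos x)
  have hinj : Set.InjOn ρ Set.univ := Set.injOn_of_injective hmono.injective
  have hsurj : Function.Surjective ρ := (hρ.continuous).surjective hρtop hρbot
  have himg : ρ '' Set.univ = Set.univ := by
    rw [Set.image_univ]
    exact hsurj.range_eq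
  set u : ℝ → ℝ := fun y =>
    (Stmt8Aux.He n).eval y * (Stmt8Aux.He m).eval y * Real.exp (-(y ^ 2 / 2)) with hu
  set c : ℂ := (starRingEnd ℂ) Nψ * Nφ
      * ((Real.sqrt 2 ^ n / Real.sqrt (2 ^ n * n.factorial) : ℝ) : ℂ)
      * ((Real.sqrt 2 ^ m / Real.sqrt (2 ^ m * m.factorial) : ℝ) : ℂ) with hc
  have key : (fun x => (starRingEnd ℂ) (ψ m x) * φ n x)
      = fun x => |1 / α x| • ((fun y => c * ((u y : ℝ) : ℂ)) (ρ x)) := by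
    funext x
    rw [hψdef m, hφdef n]
    simp only [hu, hc]
    rw [abs_of_pos (one_div_pos.mpr (hαpos x))]
    rw [show (-(ρ x) ^ 2 / 2 : ℝ) = -((ρ x) ^ 2 / 2) by ring]
    rw [Stmt8Aux.hermiteH_sqrt2, Stmt8Aux.hermiteH_sqrt2]
    simp only [map_mul, map_div₀, Complex.conj_ofReal, map_one, Complex.real_smul]
    push_cast
    ring
  have hu_int : Integrable u := Stmt8Aux.integrable_He2 n m
  have hh_int : Integrable (fun y => c * ((u y : ℝ) : ℂ)) := hu_int.ofReal.const_mul c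
  have hCV := integral_image_eq_integral_abs_deriv_smul MeasurableSet.univ hderiv hinj
    (fun y => c * ((u y : ℝ) : ℂ))
  constructor
  · rw [key]
    have h1 := (integrableOn_image_iff_integrableOn_abs_deriv_smul MeasurableSet.univ hderiv hinj
      (fun y => c * ((u y : ℝ) : ℂ))).mp (by rw [himg, integrableOn_univ]; exact hh_int)
    exact integrableOn_univ.mp h1
  · rw [key]
    have h2 : (∫ x : ℝ, |1 / α x| • ((fun y => c * ((u y : ℝ) : ℂ)) (ρ x)))
        = ∫ y : ℝ, c * ((u y : ℝ) : ℂ) :=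
      calc (∫ x : ℝ, |1 / α x| • ((fun y => c * ((u y : ℝ) : ℂ)) (ρ x)))
          = ∫ x in Set.univ, |1 / α x| • ((fun y => c * ((u y : ℝ) : ℂ)) (ρ x)) :=
            setIntegral_univ.symm
        _ = ∫ y in ρ '' Set.univ, c * ((u y : ℝ) : ℂ) := hCV.symm
        _ = ∫ y in Set.univ, c * ((u y : ℝ) : ℂ) := by rw [himg]
        _ = ∫ y : ℝ, c * ((u y : ℝ) : ℂ) := setIntegral_univ
    rw [h2, integral_const_mul]
    rw [show (∫ a : ℝ, ((u a : ℝ) : ℂ)) = ((∫ a : ℝ, u a : ℝ) : ℂ) from integral_ofReal]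
    have hJ : ∫ y : ℝ, u y = Stmt8Aux.J n m := rfl
    rw [hJ, Stmt8Aux.J_eq n m]
    by_cases h : n = m
    · subst h
      simp only [if_pos rfl]
      have hpos : (0:ℝ) < Real.sqrt (2 * Real.pi) := Real.sqrt_pos.mpr (by positivity)
      have h1 : (Real.sqrt 2) ^ n * (Real.sqrt 2) ^ n = 2 ^ n := by
        rw [← mul_pow, Real.mul_self_sqrt (by norm_num : (0:ℝ) ≤ 2)]
      have h2 : Real.sqrt ((2:ℝ) ^ n * n.factorial) * Real.sqrt ((2:ℝ) ^ n * n.factorial)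
          = 2 ^ n * n.factorial := Real.mul_self_sqrt (by positivity)
      have hfac : (0:ℝ) < (n.factorial : ℝ) := by
        exact_mod_cast n.factorial_pos
      have hr : ((Real.sqrt 2 ^ n / Real.sqrt (2 ^ n * n.factorial) : ℝ))
          * (Real.sqrt 2 ^ n / Real.sqrt (2 ^ n * n.factorial) : ℝ)
          * ((n.factorial : ℝ) * Real.sqrt (2 * Real.pi)) = Real.sqrt (2 * Real.pi) := by
        rw [div_mul_div_comm, h1, h2]
        have h2n : ((2:ℝ) ^ n * n.factorial) ≠ 0 := by positivity
        field_simp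
      have hcast : ((Real.sqrt 2 ^ n / Real.sqrt (2 ^ n * n.factorial) : ℝ) : ℂ)
          * ((Real.sqrt 2 ^ n / Real.sqrt (2 ^ n * n.factorial) : ℝ) : ℂ)
          * (((n.factorial : ℝ) * Real.sqrt (2 * Real.pi) : ℝ) : ℂ)
          = (Real.sqrt (2 * Real.pi) : ℂ) := by
        rw [← Complex.ofReal_mul, ← Complex.ofReal_mul, hr]
      rw [hc, hN]
      calc ((Real.sqrt (2 * Real.pi) : ℂ))⁻¹
            * ((Real.sqrt 2 ^ n / Real.sqrt (2 ^ n * n.factorial) : ℝ) : ℂ)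
            * ((Real.sqrt 2 ^ n / Real.sqrt (2 ^ n * n.factorial) : ℝ) : ℂ)
            * (((n.factorial : ℝ) * Real.sqrt (2 * Real.pi) : ℝ) : ℂ)
          = ((Real.sqrt (2 * Real.pi) : ℂ))⁻¹
            * (((Real.sqrt 2 ^ n / Real.sqrt (2 ^ n * n.factorial) : ℝ) : ℂ)
              * ((Real.sqrt 2 ^ n / Real.sqrt (2 ^ n * n.factorial) : ℝ) : ℂ)
              * (((n.factorial : ℝ) * Real.sqrt (2 * Real.pi) : ℝ) : ℂ)) := by ring
        _ = ((Real.sqrt (2 * Real.pi) : ℂ))⁻¹ * (Real.sqrt (2 * Real.pi) : ℂ) := by rw [hcast]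
        _ = 1 := inv_mul_cancel₀ (Complex.ofReal_ne_zero.mpr hpos.ne')
    · simp [h]
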